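/- arXiv:2011.01133 — 2 statements merged into one kernel-verified Lean document; each statement's English description precedes it below -/
import Mathlib

section
/- Let x be an n-dimensional observable on the lexicographic MV-algebra M = Γ(H ⋉ G,(u,0)) and let F_x be its spectral resolution. If (t^m) is a sequence in ℝⁿ increasing coordinatewise to t ∈ ℝⁿ with t^m_i < t_i for every coordinate i and every m, then the supremum of {F_x(t^m) : m ∈ ℕ} equals F_x(t). -/
open Function Set

/-- A partially ordered set is Dedekind σ-complete if every monotone increasing
sequence bounded above has a supremum. -/
def DedekindSigmaComplete (G : Type*) [Preorder G] : Prop :=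
  ∀ f : ℕ → G, Monotone f → BddAbove (Set.range f) → ∃ g, IsLUB (Set.range f) g

section Lexi

variable {H : Type*} [AddCommGroup H] [LinearOrder H] [IsOrderedAddMonoid H]
variable {G : Type*} [AddCommGroup G] [Lattice G] [CovariantClass G G (· + ·) (· ≤ ·)]

/-- `u` is a strong unit of `H`. -/
def IsStrongUnit (u : H) : Prop := ∀ h : H, ∃ n : ℕ, 0 < n ∧ h ≤ n • u

/-- The underlying set of the lexicographic MV-algebra `Γ(H ⋉ G, (u,0))`. -/
def MSet (u : H) : Set (H ×ₗ G) := Set.Icc (toLex ((0 : H), (0 : G))) (toLex (u, (0 : G)))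

/-- `M_h`: the elements of `M` whose first coordinate is `h`. -/
def MLevel (u h : H) : Set (H ×ₗ G) := {z ∈ MSet (G := G) u | (ofLex z).1 = h}

/-- A sequence of elements of `M` is summable if all its finite partial sums lie in `M`. -/
def SummableSeq (u : H) (a : ℕ → H ×ₗ G) : Prop := ∀ F : Finset ℕ, ∑ m ∈ F, a m ∈ MSet u

/-- `x` is an `n`-dimensional observable on `Γ(H ⋉ G, (u,0))`. -/
def IsObservable (u : H) (n : ℕ) (x : Set (Fin n → ℝ) → H ×ₗ G) : Prop :=
  (∀ A : Set (Fin n → ℝ), MeasurableSet A → x A ∈ MSet u) ∧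
  x Set.univ = toLex (u, (0 : G)) ∧
  ∀ A : ℕ → Set (Fin n → ℝ), (∀ m, MeasurableSet (A m)) → Pairwise (Disjoint on A) →
    (∀ F : Finset ℕ, ∑ m ∈ F, x (A m) ∈ MSet u) ∧
    IsLUB {y | ∃ F : Finset ℕ, y = ∑ m ∈ F, x (A m)} (x (⋃ m, A m))

/-- The spectral resolution `F_x` of an observable `x`. -/
def specRes {n : ℕ} (x : Set (Fin n → ℝ) → H ×ₗ G) : (Fin n → ℝ) → H ×ₗ G :=
  fun t => x {s | ∀ i, s i < t i}

/-- The increment `V(F,[a,b))`. -/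
def boxSum {n : ℕ} (F : (Fin n → ℝ) → H ×ₗ G) (a b : Fin n → ℝ) : H ×ₗ G :=
  ∑ S : Finset (Fin n), ((-1 : ℤ) ^ (n - S.card)) • F (fun i => if i ∈ S then b i else a i)

/-- `F` is an `n`-dimensional spectral resolution on `Γ(H ⋉ G, (u,0))`. -/
def IsSpectralResolution (u : H) (n : ℕ) (F : (Fin n → ℝ) → H ×ₗ G) : Prop :=
  Monotone F ∧
  IsLUB (Set.range F) (toLex (u, (0 : G))) ∧
  (∀ t : Fin n → ℝ, IsLUB {y | ∃ s : Fin n → ℝ, (∀ i, s i < t i) ∧ y = F s} (F t)) ∧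
  (∀ (i : Fin n) (s : Fin n → ℝ),
      IsGLB {y | ∃ r : ℝ, y = F (Function.update s i r)} (toLex ((0 : H), (0 : G)))) ∧
  (∀ a b : Fin n → ℝ, a ≤ b →
      toLex ((0 : H), (0 : G)) ≤ boxSum F a b ∧ boxSum F a b ≤ toLex (u, (0 : G)))

/-- `T_h = {s ∈ ℝⁿ : F s ∈ M_h}`. -/
def TSet (u : H) {n : ℕ} (F : (Fin n → ℝ) → H ×ₗ G) (h : H) : Set (Fin n → ℝ) :=
  {s | F s ∈ MLevel u h}

/-- The projection `π_j^h(s)`. -/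
noncomputable def proj (u : H) {n : ℕ} (F : (Fin n → ℝ) → H ×ₗ G) (h : H)
    (s : Fin n → ℝ) (j : Fin n) : ℝ :=
  sInf {r : ℝ | Function.update s j r ∈ TSet u F h}

/-- The characteristic point `π_h(s)` associated to `s ∈ T_h`. -/
noncomputable def charPt (u : H) {n : ℕ} (F : (Fin n → ℝ) → H ×ₗ G) (h : H)
    (s : Fin n → ℝ) : Fin n → ℝ :=
  fun j => proj u F h s j

/-- The set of characteristic points of `T_h`. -/
def charPts (u : H) {n : ℕ} (F : (Fin n → ℝ) → H ×ₗ G) (h : H) : Set (Fin n → ℝ) :=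
  charPt u F h '' TSet u F h

/-- The set of all characteristic points of `F`. -/
def charPoints (u : H) {n : ℕ} (F : (Fin n → ℝ) → H ×ₗ G) : Set (Fin n → ℝ) :=
  {p | ∃ h : H, 0 < h ∧ h ≤ u ∧ p ∈ charPts u F h}

/-- A block of some `T_h`, `0 < h ≤ u`. -/
def IsBlock (u : H) {n : ℕ} (F : (Fin n → ℝ) → H ×ₗ G) (C : Set (Fin n → ℝ)) : Prop :=
  ∃ h : H, 0 < h ∧ h ≤ u ∧ ∃ s ∈ TSet u F h,
    C = {t ∈ TSet u F h | charPt u F h t = charPt u F h s}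

/-- A `T_0`-adjoined block. -/
def IsT0AdjBlock (u : H) {n : ℕ} (F : (Fin n → ℝ) → H ×ₗ G) (C : Set (Fin n → ℝ)) : Prop :=
  ∃ h : H, 0 < h ∧ h ≤ u ∧ (∃ s ∈ TSet u F h,
    C = {t ∈ TSet u F h | charPt u F h t = charPt u F h s}) ∧
    ∀ t ∈ C, ∀ j : Fin n, Function.update t j (proj u F h t j) ∈ TSet u F 0

end Lexi



section MyAux
variable {H : Type*} [AddCommGroup H] [LinearOrder H] [IsOrderedAddMonoid H]
variable {G : Type*} [AddCommGroup G] [Lattice G] [CovariantClass G G (· + ·) (· ≤ ·)]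

instance myLexOrderedAddCommGroup : IsOrderedAddMonoid (H ×ₗ G) where
  add_le_add_left b c h a := by
    rw [add_comm b a, add_comm c a]
    rcases Prod.Lex.le_iff (x := b) (y := c) |>.mp h with h1 | ⟨h1, h2⟩
    · exact (Prod.Lex.le_iff (x := a+b) (y := a+c)).mpr
        (Or.inl (add_lt_add_right h1 (ofLex a).1))
    · exact (Prod.Lex.le_iff (x := a+b) (y := a+c)).mpr
        (Or.inr ⟨by show (ofLex a).1 + (ofLex b).1 = (ofLex a).1 + (ofLex c).1; rw [h1],
                 add_le_add_right h2 (ofLex a).2⟩)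

lemma myLex_zero_eq : (0 : H ×ₗ G) = toLex ((0 : H), (0 : G)) := rfl

variable {u : H} {n : ℕ} {x : Set (Fin n → ℝ) → H ×ₗ G}

lemma my_x_empty (hx : IsObservable u n x) : x ∅ = 0 := by
  obtain ⟨hmem, -, hσ⟩ := hx
  obtain ⟨-, hlub⟩ := hσ (fun _ => (∅ : Set (Fin n → ℝ))) (fun _ => MeasurableSet.empty)
    (fun i j hij => disjoint_bot_left)
  rw [Set.iUnion_empty] at hlub
  have h2 : x ∅ + x ∅ ∈ {y | ∃ F : Finset ℕ, y = ∑ _m ∈ F, x ∅} :=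
    ⟨{0, 1}, by rw [Finset.sum_pair (by norm_num)]⟩
  have hle : x ∅ + x ∅ ≤ x ∅ := hlub.1 h2
  have h0 : (0 : H ×ₗ G) ≤ x ∅ := hlub.1 ⟨∅, by simp⟩
  have : x ∅ ≤ 0 := by
    have := add_le_add_right hle (-(x ∅)); simpa using this
  exact le_antisymm this h0

lemma my_x_add (hx : IsObservable u n x) {A B : Set (Fin n → ℝ)}
    (hA : MeasurableSet A) (hB : MeasurableSet B) (hAB : Disjoint A B) :
    x (A ∪ B) = x A + x B := by
  classical
  obtain ⟨hmem, htop, hσ⟩ := hx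
  set C : ℕ → Set (Fin n → ℝ) := fun m => if m = 0 then A else if m = 1 then B else ∅ with hC
  have hCmeas : ∀ m, MeasurableSet (C m) := by
    intro m; simp only [hC]; split_ifs <;> first | exact hA | exact hB | exact MeasurableSet.empty
  have hCdisj : Pairwise (Disjoint on C) := by
    intro i j hij
    simp only [Function.onFun, hC]
    split_ifs with h1 h2 h3 h4 h5 h6 <;>
      first | omega | exact hAB | exact hAB.symm | exact disjoint_bot_right | exact disjoint_bot_left
  have hCU : (⋃ m, C m) = A ∪ B := by
    apply subset_antisymm
    · apply Set.iUnion_subset; intro m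
      simp only [hC]; split_ifs <;>
        first | exact Set.subset_union_left | exact Set.subset_union_right | exact Set.empty_subset _
    · apply Set.union_subset
      · exact (by simp [hC] : A = C 0) ▸ Set.subset_iUnion C 0
      · exact (by simp [hC] : B = C 1) ▸ Set.subset_iUnion C 1
  obtain ⟨-, hlub⟩ := hσ C hCmeas hCdisj
  rw [hCU] at hlub
  have h01 : x A + x B = ∑ m ∈ ({0, 1} : Finset ℕ), x (C m) := by
    rw [Finset.sum_pair (by norm_num)]; simp [hC]
  have hxe : x ∅ = 0 := my_x_empty ⟨hmem, htop, hσ⟩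
  have hub : (x A + x B) ∈ upperBounds {y | ∃ F : Finset ℕ, y = ∑ m ∈ F, x (C m)} := by
    rintro y ⟨F, rfl⟩
    have step1 : ∑ m ∈ F, x (C m) = ∑ m ∈ F ∩ {0, 1}, x (C m) := by
      refine (Finset.sum_subset (Finset.inter_subset_left) ?_).symm
      intro m hmF hm
      have : m ≠ 0 ∧ m ≠ 1 := by
        simp only [Finset.mem_inter, Finset.mem_insert, Finset.mem_singleton] at hm
        constructor <;> (intro h; exact hm ⟨hmF, by simp [h]⟩)
      simp [hC, this.1, this.2, hxe]
    rw [step1, h01]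
    refine Finset.sum_le_sum_of_subset_of_nonneg (Finset.inter_subset_right) ?_
    intro m _ _
    exact (hmem (C m) (hCmeas m)).1
  exact hlub.unique (isLUB_iff_le_iff.mpr (fun c => ⟨fun h y hy => le_trans (hub hy) h,
    fun h => h ⟨{0, 1}, h01.symm ▸ rfl⟩⟩))

end MyAux

theorem stmt_5 {H G : Type*} [AddCommGroup H] [LinearOrder H] [IsOrderedAddMonoid H]
    [AddCommGroup G] [Lattice G] [CovariantClass G G (· + ·) (· ≤ ·)]
    (hG : DedekindSigmaComplete G) (u : H) (hu : IsStrongUnit u)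
    (n : ℕ) (hn : 1 ≤ n) (x : Set (Fin n → ℝ) → H ×ₗ G)
    (hx : IsObservable u n x)
    (tm : ℕ → Fin n → ℝ) (t : Fin n → ℝ)
    (hmono : Monotone tm) (hlt : ∀ m, ∀ i, tm m i < t i)
    (hlim : Filter.Tendsto tm Filter.atTop (nhds t)) :
    IsLUB (Set.range fun m => specRes x (tm m)) (specRes x t) := by
  classical
  obtain ⟨hmem, htop, hσ⟩ := hx
  set B : ℕ → Set (Fin n → ℝ) := fun m => {s | ∀ i, s i < tm m i} with hBdef
  have hBmeas : ∀ m, MeasurableSet (B m) := by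
    intro m
    have : B m = ⋂ i, (fun s : Fin n → ℝ => s i) ⁻¹' Set.Iio (tm m i) := by
      ext s; simp [hBdef]
    rw [this]
    exact MeasurableSet.iInter fun i => (measurable_pi_apply i) measurableSet_Iio
  have hBmono : Monotone B := by
    intro k m hkm s hs i
    exact lt_of_lt_of_le (hs i) (hmono hkm i)
  set A : ℕ → Set (Fin n → ℝ) := disjointed B with hAdef
  have hAmeas : ∀ m, MeasurableSet (A m) := MeasurableSet.disjointed hBmeas
  have hAdisj : Pairwise (Disjoint on A) := disjoint_disjointed B
  have hAU : (⋃ m, A m) = ⋃ m, B m := iUnion_disjointed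
  have hBt : (⋃ m, B m) = {s | ∀ i, s i < t i} := by
    apply subset_antisymm
    · apply Set.iUnion_subset; intro m s hs i
      exact lt_trans (hs i) (hlt m i)
    · intro s hs
      have hco : ∀ i, Filter.Tendsto (fun m => tm m i) Filter.atTop (nhds (t i)) :=
        fun i => tendsto_pi_nhds.mp hlim i
      have hev : ∀ᶠ m in Filter.atTop, ∀ i, s i < tm m i :=
        Filter.eventually_all.mpr fun i => (hco i).eventually_const_lt (hs i)
      obtain ⟨m, hm⟩ := hev.exists
      exact Set.mem_iUnion.mpr ⟨m, hm⟩
  have hsum : ∀ m, x (B m) = ∑ k ∈ Finset.range (m + 1), x (A k) := by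
    intro m
    induction m with
    | zero => simp [hAdef, disjointed_zero]
    | succ m ih =>
      rw [Finset.sum_range_succ, ← ih]
      have hA1 : A (m + 1) = B (m + 1) \ B m := hBmono.disjointed_succ (not_isMax m)
      have hdis : Disjoint (B m) (A (m + 1)) := hA1 ▸ disjoint_sdiff_self_right
      have hun : B m ∪ A (m + 1) = B (m + 1) := by
        rw [Set.union_comm]; exact hBmono.disjointed_succ_sup m
      rw [← hun, my_x_add ⟨hmem, htop, hσ⟩ (hBmeas m) (hAmeas (m + 1)) hdis]
  obtain ⟨-, hlub⟩ := hσ A hAmeas hAdisj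
  rw [hAU, hBt] at hlub
  have heq : specRes x t = x {s | ∀ i, s i < t i} := rfl
  rw [heq]
  constructor
  · rintro _ ⟨m, rfl⟩
    exact hlub.1 ⟨Finset.range (m + 1), hsum m⟩
  · intro c hc
    apply hlub.2
    rintro y ⟨F, rfl⟩
    set N := F.sup id with hN
    have hFsub : F ⊆ Finset.range (N + 1) := by
      intro m hm
      exact Finset.mem_range.mpr (Nat.lt_succ_of_le (Finset.le_sup (f := id) hm))
    have h1 : ∑ m ∈ F, x (A m) ≤ ∑ m ∈ Finset.range (N + 1), x (A m) :=
      Finset.sum_le_sum_of_subset_of_nonneg hFsub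
        (fun m _ _ => (hmem (A m) (hAmeas m)).1)
    refine le_trans h1 ?_
    rw [← hsum N]
    exact hc ⟨N, rfl⟩
end

section
/- Let x be an n-dimensional observable on the k-perfect MV-algebra M = Γ(ℤ ⋉ G,(k,0)) and let F = F_x be its spectral resolution. If i is the least nonzero integer such that T_i is nonempty, then T_i has only finitely many characteristic points. -/
open Function Set

set_option linter.unusedSectionVars false
set_option linter.unusedVariables false

section Dev
variable {G : Type*} [AddCommGroup G] [Lattice G] [CovariantClass G G (· + ·) (· ≤ ·)]

def gOACG : IsOrderedAddMonoid G :=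
  { add_le_add_left := fun a b h c => by
      rw [add_comm a, add_comm b]; exact CovariantClass.elim c h }

attribute [local instance] gOACG

noncomputable def lexOACG : IsOrderedAddMonoid (ℤ ×ₗ G) := Prod.Lex.isOrderedAddMonoid

attribute [local instance] lexOACG

lemma lexle_iff (a b : ℤ ×ₗ G) : a ≤ b ↔ ((ofLex a).1 < (ofLex b).1 ∨
    ((ofLex a).1 = (ofLex b).1 ∧ (ofLex a).2 ≤ (ofLex b).2)) := Prod.Lex.le_iff

lemma lexfst_mono {a b : ℤ ×ₗ G} (h : a ≤ b) : (ofLex a).1 ≤ (ofLex b).1 := by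
  rcases (lexle_iff a b).mp h with h | h
  · exact le_of_lt h
  · exact le_of_eq h.1

lemma lexfst_add (a b : ℤ ×ₗ G) : (ofLex (a + b)).1 = (ofLex a).1 + (ofLex b).1 := rfl

variable {n k : ℕ} {x : Set (Fin n → ℝ) → ℤ ×ₗ G}

/-- lower quadrant -/
def lowQ {n : ℕ} (t : Fin n → ℝ) : Set (Fin n → ℝ) := {s | ∀ j, s j < t j}

lemma measQ (t : Fin n → ℝ) : MeasurableSet (lowQ t) := by
  have : lowQ t = ⋂ j, (fun s : Fin n → ℝ => s j) ⁻¹' Set.Iio (t j) := by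
    ext y; simp [lowQ]
  rw [this]
  exact MeasurableSet.iInter fun j => (measurable_pi_apply j) measurableSet_Iio

lemma lowQ_mono {t t' : Fin n → ℝ} (h : t ≤ t') : lowQ t ⊆ lowQ t' :=
  fun y hy j => lt_of_lt_of_le (hy j) (h j)

lemma specRes_eq (t : Fin n → ℝ) : specRes x t = x (lowQ t) := rfl

section Obs
variable (hx : IsObservable (k : ℤ) n x)
include hx

lemma x_nonneg {A : Set (Fin n → ℝ)} (hA : MeasurableSet A) : 0 ≤ x A := (hx.1 A hA).1

lemma x_le_top {A : Set (Fin n → ℝ)} (hA : MeasurableSet A) : x A ≤ toLex ((k : ℤ), (0 : G)) :=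
  (hx.1 A hA).2

lemma x_empty : x ∅ = 0 := by
  have hdisj : Pairwise (Disjoint on fun _ : ℕ => (∅ : Set (Fin n → ℝ))) := by
    intro a b _; simp [Function.onFun]
  have hL := (hx.2.2 (fun _ => ∅) (fun _ => MeasurableSet.empty) hdisj).2
  rw [Set.iUnion_empty] at hL
  have h2 : x ∅ + x ∅ ∈ {y | ∃ F : Finset ℕ, y = ∑ _m ∈ F, x ∅} := by
    refine ⟨{0, 1}, ?_⟩
    rw [Finset.sum_const]
    simp [two_nsmul]
  have hle : x ∅ + x ∅ ≤ x ∅ := hL.1 h2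
  have h0 : 0 ≤ x ∅ := x_nonneg hx MeasurableSet.empty
  have hneg : x ∅ ≤ 0 := by
    have := add_le_add_right hle (-(x ∅))
    simpa using this
  exact le_antisymm hneg h0

lemma x_union {A B : Set (Fin n → ℝ)} (hA : MeasurableSet A) (hB : MeasurableSet B)
    (hAB : Disjoint A B) : x (A ∪ B) = x A + x B := by
  classical
  set A' : ℕ → Set (Fin n → ℝ) := fun m => if m = 0 then A else if m = 1 then B else ∅ with hA'
  have hmeas : ∀ m, MeasurableSet (A' m) := by
    intro m; simp only [hA']; split_ifs <;> [exact hA; exact hB; exact MeasurableSet.empty]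
  have hdisj : Pairwise (Disjoint on A') := by
    intro a b hab
    simp only [Function.onFun, hA']
    split_ifs with h1 h2 h3 h4 h5 h6 h7 <;>
      first
        | (exfalso; omega)
        | exact hAB
        | exact hAB.symm
        | simp
  have hL := (hx.2.2 A' hmeas hdisj).2
  have hU : (⋃ m, A' m) = A ∪ B := by
    ext y
    simp only [Set.mem_iUnion, Set.mem_union, hA']
    constructor
    · rintro ⟨m, hm⟩
      split_ifs at hm with h1 h2
      · exact Or.inl hm
      · exact Or.inr hm
      · exact absurd hm (Set.notMem_empty y)
    · rintro (h | h)
      · exact ⟨0, by simp [h]⟩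
      · exact ⟨1, by simp [h]⟩
  rw [hU] at hL
  have hkey : IsGreatest {y | ∃ F : Finset ℕ, y = ∑ m ∈ F, x (A' m)} (x A + x B) := by
    constructor
    · refine ⟨{0, 1}, ?_⟩
      rw [Finset.sum_pair (by norm_num : (0:ℕ) ≠ 1)]
      simp [hA']
    · rintro y ⟨F, rfl⟩
      have hsub : F ∩ {0, 1} ⊆ F := Finset.inter_subset_left
      have h1 : ∑ m ∈ F, x (A' m) = ∑ m ∈ F ∩ {0, 1}, x (A' m) := by
        refine (Finset.sum_subset hsub ?_).symm
        intro m hmF hm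
        have : A' m = ∅ := by
          simp only [Finset.mem_inter, Finset.mem_insert, Finset.mem_singleton, not_and_or,
            not_or] at hm
          have : m ≠ 0 ∧ m ≠ 1 := by
            rcases hm with h | h
            · exact absurd hmF h
            · exact h
          simp [hA', this.1, this.2]
        rw [this, x_empty hx]
      rw [h1]
      calc ∑ m ∈ F ∩ {0, 1}, x (A' m) ≤ ∑ m ∈ ({0, 1} : Finset ℕ), x (A' m) :=
            Finset.sum_le_sum_of_subset_of_nonneg Finset.inter_subset_right
              (fun m _ _ => x_nonneg hx (hmeas m))
        _ = x A + x B := by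
            rw [Finset.sum_pair (by norm_num : (0:ℕ) ≠ 1)]; simp [hA']
  exact hL.unique hkey.isLUB

end Obs
end Dev
section Dev2
variable {G : Type*} [AddCommGroup G] [Lattice G] [CovariantClass G G (· + ·) (· ≤ ·)]
attribute [local instance] gOACG lexOACG
variable {n k : ℕ} {x : Set (Fin n → ℝ) → ℤ ×ₗ G}

/-- The integer-valued first coordinate of `x`. -/
def muz (x : Set (Fin n → ℝ) → ℤ ×ₗ G) (A : Set (Fin n → ℝ)) : ℤ := (ofLex (x A)).1

section Obs2
variable (hx : IsObservable (k : ℤ) n x)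
include hx

lemma mu_nonneg {A : Set (Fin n → ℝ)} (hA : MeasurableSet A) : 0 ≤ muz x A :=
  lexfst_mono (x_nonneg hx hA)

lemma mu_le_k {A : Set (Fin n → ℝ)} (hA : MeasurableSet A) : muz x A ≤ (k : ℤ) :=
  lexfst_mono (x_le_top hx hA)

lemma mu_empty : muz x ∅ = 0 := by unfold muz; rw [x_empty hx]; rfl

lemma mu_univ : muz x Set.univ = (k : ℤ) := by unfold muz; rw [hx.2.1]; rfl

lemma mu_add {A B : Set (Fin n → ℝ)} (hA : MeasurableSet A) (hB : MeasurableSet B)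
    (hAB : Disjoint A B) : muz x (A ∪ B) = muz x A + muz x B := by
  unfold muz; rw [x_union hx hA hB hAB]; rfl

lemma mu_mono {A B : Set (Fin n → ℝ)} (hA : MeasurableSet A) (hB : MeasurableSet B)
    (hAB : A ⊆ B) : muz x A ≤ muz x B := by
  have h1 : A ∪ (B \ A) = B := Set.union_diff_cancel hAB
  have h2 := mu_add hx hA (hB.diff hA) Set.disjoint_sdiff_right
  rw [h1] at h2
  have := mu_nonneg hx (hB.diff hA)
  omega

lemma mu_union_le {A B : Set (Fin n → ℝ)} (hA : MeasurableSet A) (hB : MeasurableSet B) :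
    muz x (A ∪ B) ≤ muz x A + muz x B := by
  have h1 : A ∪ (B \ A) = A ∪ B := by rw [Set.union_diff_self]
  have h2 := mu_add hx hA (hB.diff hA) Set.disjoint_sdiff_right
  rw [h1] at h2
  have := mu_mono hx (hB.diff hA) hB Set.diff_subset
  omega

lemma mu_biUnion_le {ι : Type*} (s : Finset ι) (f : ι → Set (Fin n → ℝ))
    (hf : ∀ m, MeasurableSet (f m)) :
    muz x (⋃ m ∈ s, f m) ≤ ∑ m ∈ s, muz x (f m) := by
  classical
  induction s using Finset.induction with
  | empty => simp [mu_empty hx]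
  | insert _ _ hnotmem ih =>
    rename_i a s
    rw [Finset.set_biUnion_insert, Finset.sum_insert hnotmem]
    calc muz x (f a ∪ ⋃ m ∈ s, f m) ≤ muz x (f a) + muz x (⋃ m ∈ s, f m) :=
          mu_union_le hx (hf a) (s.measurableSet_biUnion fun m _ => hf m)
      _ ≤ muz x (f a) + ∑ m ∈ s, muz x (f m) := by omega

lemma mu_sum_le_of_disjoint {ι : Type*} (s : Finset ι) (f : ι → Set (Fin n → ℝ))
    (hf : ∀ m, MeasurableSet (f m)) (hdisj : ∀ a ∈ s, ∀ b ∈ s, a ≠ b → Disjoint (f a) (f b)) :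
    ∑ m ∈ s, muz x (f m) ≤ (k : ℤ) := by
  classical
  have key : ∑ m ∈ s, muz x (f m) = muz x (⋃ m ∈ s, f m) := by
    induction s using Finset.induction with
    | empty => simp [mu_empty hx]
    | insert _ _ hnotmem ih =>
      rename_i a s
      rw [Finset.set_biUnion_insert, Finset.sum_insert hnotmem]
      have hd : Disjoint (f a) (⋃ m ∈ s, f m) := by
        refine Set.disjoint_iUnion₂_right.mpr fun m hm => ?_
        exact hdisj a (Finset.mem_insert_self a s) m (Finset.mem_insert_of_mem hm)
          (fun h => hnotmem (h ▸ hm))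
      rw [mu_add hx (hf a) (s.measurableSet_biUnion fun m _ => hf m) hd,
        ih (fun a ha b hb hab => hdisj a (Finset.mem_insert_of_mem ha) b
          (Finset.mem_insert_of_mem hb) hab)]
  rw [key]
  calc muz x (⋃ m ∈ s, f m) ≤ muz x Set.univ :=
        mu_mono hx (s.measurableSet_biUnion fun m _ => hf m) MeasurableSet.univ
          (Set.subset_univ _)
    _ = (k : ℤ) := mu_univ hx

end Obs2
end Dev2
section Dev3
variable {G : Type*} [AddCommGroup G] [Lattice G] [CovariantClass G G (· + ·) (· ≤ ·)]
attribute [local instance] gOACG lexOACG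
variable {n k : ℕ} {x : Set (Fin n → ℝ) → ℤ ×ₗ G}

lemma update_le_update {s : Fin n → ℝ} {m : Fin n} {a b : ℝ} (h : a ≤ b) :
    Function.update s m a ≤ Function.update s m b := by
  intro j
  rcases eq_or_ne j m with rfl | hj
  · simpa using h
  · simp [Function.update_of_ne hj]

lemma update_le_self {s : Fin n → ℝ} {m : Fin n} {a : ℝ} (h : a ≤ s m) :
    Function.update s m a ≤ s := by
  intro j
  rcases eq_or_ne j m with rfl | hj
  · simpa using h
  · simp [Function.update_of_ne hj]

section Obs3
variable (hx : IsObservable (k : ℤ) n x)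
include hx

lemma exists_line_zero (s : Fin n → ℝ) (m : Fin n) :
    ∃ r : ℝ, muz x (lowQ (Function.update s m r)) = 0 := by
  classical
  by_contra hcon
  push_neg at hcon
  have hpos : ∀ r : ℝ, 1 ≤ muz x (lowQ (Function.update s m r)) := by
    intro r
    have h0 := mu_nonneg hx (measQ (Function.update s m r))
    have := hcon r
    omega
  set c : ℕ → (Fin n → ℝ) := fun l => Function.update s m (s m - l) with hc
  set Qd : ℕ → Set (Fin n → ℝ) := fun l => lowQ (c l) with hQd
  have hQanti : ∀ {a b : ℕ}, a ≤ b → Qd b ⊆ Qd a := by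
    intro a b hab
    have hcast : (a : ℝ) ≤ b := Nat.cast_le.mpr hab
    exact lowQ_mono (update_le_update (by linarith))
  set B : ℕ → Set (Fin n → ℝ) := fun l => Qd l \ Qd (l + 1) with hB
  have measB : ∀ l, MeasurableSet (B l) := fun l => (measQ _).diff (measQ _)
  have hdisj : Pairwise (Disjoint on B) := by
    have asym : ∀ a b : ℕ, a < b → Disjoint (B a) (B b) := by
      intro a b hab
      have h1 : B b ⊆ Qd (a + 1) := fun y hy => hQanti hab hy.1
      exact (Set.disjoint_sdiff_left (t := Qd a) (s := Qd (a + 1))).mono_right h1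
    intro a b hab
    rcases hab.lt_or_gt with h | h
    · exact asym a b h
    · exact (asym b a h).symm
  have hU : (⋃ l, B l) = Qd 0 := by
    apply Set.Subset.antisymm
    · exact Set.iUnion_subset fun l => (Set.diff_subset).trans (hQanti (Nat.zero_le l))
    · intro y hy
      have hex : ∃ l, y ∉ Qd (l + 1) := by
        obtain ⟨L, hL⟩ := exists_nat_gt (s m - y m)
        refine ⟨L, fun hy' => ?_⟩
        have := hy' m
        rw [hc] at this
        simp only [Function.update_self] at this
        push_cast at this
        linarith
      set l₀ := Nat.find hex with hl₀
      have h₀ : y ∉ Qd (l₀ + 1) := Nat.find_spec hex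
      have h₁ : y ∈ Qd l₀ := by
        rcases Nat.eq_zero_or_pos l₀ with h | h
        · rw [h]; exact hy
        · have h2 := Nat.find_min hex (show l₀ - 1 < l₀ by omega)
          have h3 : l₀ - 1 + 1 = l₀ := by omega
          rw [h3] at h2
          exact not_not.mp h2
      exact Set.mem_iUnion.mpr ⟨l₀, h₁, h₀⟩
  have hL := (hx.2.2 B measB hdisj).2
  rw [hU] at hL
  have htel : ∀ L : ℕ, ∑ l ∈ Finset.range L, x (B l) = x (Qd 0) - x (Qd L) := by
    intro L
    induction L with
    | zero => simp
    | succ L ih =>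
      rw [Finset.sum_range_succ, ih]
      have hsplit : x (Qd L) = x (Qd (L + 1)) + x (B L) := by
        have hu : Qd (L + 1) ∪ B L = Qd L :=
          Set.union_diff_cancel (hQanti (Nat.le_succ L))
        rw [← hu, x_union hx (measQ _) (measB L) Set.disjoint_sdiff_right]
      rw [hsplit]
      abel
  have hbex : ∃ b : ℤ ×ₗ G, (∀ L : ℕ, b ≤ x (Qd L)) ∧ ¬b ≤ 0 := by
    by_cases htriv : ∀ g : G, g = 0
    · refine ⟨toLex ((1 : ℤ), (0 : G)), fun L => ?_, fun hb => ?_⟩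
      · have h1 : 1 ≤ (ofLex (x (Qd L))).1 := hpos (s m - L)
        rcases eq_or_lt_of_le h1 with h | h
        · exact (lexle_iff _ _).mpr (Or.inr ⟨h.symm ▸ rfl, le_of_eq (htriv _).symm⟩)
        · exact (lexle_iff _ _).mpr (Or.inl h)
      · rcases (lexle_iff _ _).mp hb with h | h
        · norm_num at h
        · exact absurd h.1 (by norm_num)
    · push_neg at htriv
      obtain ⟨g, hg⟩ := htriv
      have hgex : ∃ g' : G, 0 < g' := by
        by_cases h1 : g ⊔ 0 = 0
        · have hgle : g ≤ 0 := sup_eq_right.mp h1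
          exact ⟨-g, neg_pos.mpr (lt_of_le_of_ne hgle hg)⟩
        · exact ⟨g ⊔ 0, lt_of_le_of_ne le_sup_right (Ne.symm h1)⟩
      obtain ⟨g', hg'⟩ := hgex
      refine ⟨toLex ((0 : ℤ), g'), fun L => ?_, fun hb => ?_⟩
      · exact (lexle_iff _ _).mpr (Or.inl (by exact_mod_cast hpos (s m - L)))
      · rcases (lexle_iff _ _).mp hb with h | h
        · norm_num at h
        · exact absurd (lt_of_lt_of_le hg' h.2) (lt_irrefl _)
  obtain ⟨b, hb, hbpos⟩ := hbex
  have hub : ∀ y ∈ {y | ∃ F : Finset ℕ, y = ∑ l ∈ F, x (B l)}, y ≤ x (Qd 0) - b := by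
    rintro y ⟨F, rfl⟩
    have hFsub : F ⊆ Finset.range (F.sup id + 1) := by
      intro m hm
      exact Finset.mem_range.mpr (Nat.lt_succ_of_le (Finset.le_sup (f := id) hm))
    calc ∑ l ∈ F, x (B l) ≤ ∑ l ∈ Finset.range (F.sup id + 1), x (B l) :=
          Finset.sum_le_sum_of_subset_of_nonneg hFsub fun l _ _ => x_nonneg hx (measB l)
      _ = x (Qd 0) - x (Qd (F.sup id + 1)) := htel _
      _ ≤ x (Qd 0) - b := sub_le_sub_left (hb _) _
  have hfinal : x (Qd 0) ≤ x (Qd 0) - b := hL.2 hub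
  have : b ≤ 0 := by
    have h2 := le_sub_iff_add_le.mp hfinal
    exact (add_le_iff_nonpos_right _).mp h2
  exact hbpos this

end Obs3
end Dev3
section Dev4
variable {G : Type*} [AddCommGroup G] [Lattice G] [CovariantClass G G (· + ·) (· ≤ ·)]
attribute [local instance] gOACG lexOACG
variable {n k : ℕ} {x : Set (Fin n → ℝ) → ℤ ×ₗ G}

section Obs4
variable (hx : IsObservable (k : ℤ) n x)
include hx

lemma mem_TSet_iff (t : Fin n → ℝ) (h : ℤ) :
    t ∈ TSet (k : ℤ) (specRes x) h ↔ muz x (lowQ t) = h := by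
  constructor
  · rintro ⟨_, h2⟩; exact h2
  · intro h2; exact ⟨hx.1 _ (measQ t), h2⟩

lemma mu_supermod (u v : Fin n → ℝ) :
    muz x (lowQ u) + muz x (lowQ v) ≤ muz x (lowQ (u ⊓ v)) + muz x (lowQ (u ⊔ v)) := by
  have hmeet : lowQ (u ⊓ v) = lowQ u ∩ lowQ v := by
    ext y; simp [lowQ, lt_inf_iff, forall_and]
  have h1 : muz x (lowQ u ∪ lowQ v) = muz x (lowQ u) + muz x (lowQ v \ lowQ u) := by
    rw [← Set.union_diff_self]
    exact mu_add hx (measQ u) ((measQ v).diff (measQ u)) Set.disjoint_sdiff_right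
  have h2 : muz x (lowQ v) = muz x (lowQ v ∩ lowQ u) + muz x (lowQ v \ lowQ u) := by
    conv_lhs => rw [← Set.inter_union_diff (lowQ v) (lowQ u)]
    exact mu_add hx ((measQ v).inter (measQ u)) ((measQ v).diff (measQ u))
      (Set.disjoint_sdiff_right.mono_left Set.inter_subset_right)
  have h3 : muz x (lowQ u ∪ lowQ v) ≤ muz x (lowQ (u ⊔ v)) :=
    mu_mono hx ((measQ u).union (measQ v)) (measQ _)
      (Set.union_subset (lowQ_mono le_sup_left) (lowQ_mono le_sup_right))
  rw [hmeet, Set.inter_comm]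
  omega

lemma exists_mass_box {i : ℕ} (hi1 : 1 ≤ i)
    (hleast : ∀ j : ℕ, 1 ≤ j → j < i → TSet (k : ℤ) (specRes x) (j : ℤ) = ∅)
    {s : Fin n → ℝ} (hs : s ∈ TSet (k : ℤ) (specRes x) (i : ℤ)) {ε : ℝ} (hε : 0 < ε) :
    ∃ Bx : Set (Fin n → ℝ), MeasurableSet Bx ∧ (i : ℤ) ≤ muz x Bx ∧
      ∀ y ∈ Bx, ∀ j, |y j - charPt (k : ℤ) (specRes x) (i : ℤ) s j| < ε := by
  classical
  set p : Fin n → ℝ := charPt (k : ℤ) (specRes x) (i : ℤ) s with hp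
  set S : Fin n → Set ℝ := fun j => {r | muz x (lowQ (Function.update s j r)) = (i : ℤ)}
    with hSdef
  have hpS : ∀ j, p j = sInf (S j) := by
    intro j
    have hset : {r : ℝ | Function.update s j r ∈ TSet (k : ℤ) (specRes x) (i : ℤ)} = S j :=
      Set.ext fun r => mem_TSet_iff hx _ _
    rw [hp]
    show proj (k : ℤ) (specRes x) (i : ℤ) s j = sInf (S j)
    unfold proj
    rw [hset]
  have hmu_s : muz x (lowQ s) = (i : ℤ) := (mem_TSet_iff hx s _).mp hs
  have hmono : ∀ {a b : Fin n → ℝ}, a ≤ b → muz x (lowQ a) ≤ muz x (lowQ b) :=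
    fun h => mu_mono hx (measQ _) (measQ _) (lowQ_mono h)
  have hsm : ∀ j, s j ∈ S j := by
    intro j
    simp only [hSdef, Set.mem_setOf_eq, Function.update_eq_self]
    exact hmu_s
  have hval : ∀ t : Fin n → ℝ, t ≤ s →
      muz x (lowQ t) = 0 ∨ muz x (lowQ t) = (i : ℤ) := by
    intro t ht
    have h0 : 0 ≤ muz x (lowQ t) := mu_nonneg hx (measQ t)
    have hi' : muz x (lowQ t) ≤ (i : ℤ) := hmu_s ▸ hmono ht
    by_contra hcc
    push_neg at hcc
    set v := muz x (lowQ t) with hv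
    have h1 : 1 ≤ v ∧ v < (i : ℤ) := ⟨by omega, by omega⟩
    have hemp := hleast v.toNat (by omega) (by omega)
    have hmem : t ∈ TSet (k : ℤ) (specRes x) ((v.toNat : ℕ) : ℤ) :=
      (mem_TSet_iff hx t _).mpr (by omega)
    rw [hemp] at hmem
    exact hmem
  have hbdd : ∀ j, BddBelow (S j) := by
    intro j
    obtain ⟨r₀, hr₀⟩ := exists_line_zero hx s j
    refine ⟨r₀, fun r hr => ?_⟩
    by_contra hlt
    push_neg at hlt
    have hle : muz x (lowQ (Function.update s j r)) ≤ muz x (lowQ (Function.update s j r₀)) :=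
      hmono (update_le_update hlt.le)
    have hri : muz x (lowQ (Function.update s j r)) = (i : ℤ) := hr
    omega
  have hpls : ∀ j, p j ≤ s j := fun j => (hpS j) ▸ csInf_le (hbdd j) (hsm j)
  have hzero : ∀ (j : Fin n) (r : ℝ), r < p j →
      muz x (lowQ (Function.update s j r)) = 0 := by
    intro j r hr
    have hne : muz x (lowQ (Function.update s j r)) ≠ (i : ℤ) := by
      intro hcon
      have : p j ≤ r := (hpS j) ▸ csInf_le (hbdd j) hcon
      linarith
    have hle : Function.update s j r ≤ s := update_le_self (le_trans hr.le (hpls j))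
    rcases hval _ hle with h | h
    · exact h
    · exact absurd h hne
  set ε' : ℝ := ε / 2 with hε'
  have hε'pos : 0 < ε' := by positivity
  set σ : Fin n → ℝ := fun j => min (s j) (p j + ε') with hσ
  have hσs : σ ≤ s := fun j => min_le_left _ _
  have hσS : ∀ j, σ j ∈ S j := by
    intro j
    rcases le_or_gt (s j) (p j + ε') with h | h
    · have : σ j = s j := min_eq_left h
      rw [show σ j = s j from this]
      exact hsm j
    · have hσj : σ j = p j + ε' := min_eq_right h.le
      rw [hσj]
      obtain ⟨r₁, hr₁S, hr₁lt⟩ := exists_lt_of_csInf_lt ⟨s j, hsm j⟩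
        (show sInf (S j) < p j + ε' by rw [← hpS j]; linarith)
      have hl : muz x (lowQ (Function.update s j r₁)) = (i : ℤ) := hr₁S
      have h1 : muz x (lowQ (Function.update s j r₁)) ≤
          muz x (lowQ (Function.update s j (p j + ε'))) := hmono (update_le_update hr₁lt.le)
      have h2 : muz x (lowQ (Function.update s j (p j + ε'))) ≤ muz x (lowQ s) :=
        hmono (update_le_self h.le)
      show muz x (lowQ (Function.update s j (p j + ε'))) = (i : ℤ)
      omega
  have hmeet : ∀ a b : Fin n → ℝ, a ≤ s → b ≤ s → muz x (lowQ a) = (i : ℤ) →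
      muz x (lowQ b) = (i : ℤ) → muz x (lowQ (a ⊓ b)) = (i : ℤ) := by
    intro a b ha hb hva hvb
    have hsup := mu_supermod hx a b
    have h1 : muz x (lowQ (a ⊔ b)) ≤ (i : ℤ) := hmu_s ▸ hmono (sup_le ha hb)
    have h2 : muz x (lowQ (a ⊓ b)) ≤ (i : ℤ) := hmu_s ▸ hmono (le_trans inf_le_left ha)
    omega
  have hσT : muz x (lowQ σ) = (i : ℤ) := by
    have key : ∀ J : Finset (Fin n),
        muz x (lowQ (fun j => if j ∈ J then σ j else s j)) = (i : ℤ) := by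
      intro J
      induction J using Finset.induction with
      | empty => simpa using hmu_s
      | insert _ _ hm ih =>
        rename_i m J
        have heq : (fun j => if j ∈ insert m J then σ j else s j) =
            (fun j => if j ∈ J then σ j else s j) ⊓ Function.update s m (σ m) := by
          funext j
          simp only [Pi.inf_apply]
          rcases eq_or_ne j m with rfl | hj
          · simp [Finset.mem_insert, hm, min_eq_right (hσs j)]
          · simp only [Finset.mem_insert, hj, false_or, Function.update_of_ne hj]
            split_ifs with hjJ
            · exact (inf_eq_left.mpr (hσs j)).symm
            · exact (inf_idem _).symm
        rw [heq]
        refine hmeet _ _ ?_ ?_ ih (hσS m)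
        · intro j; dsimp only; split_ifs with hjJ
          · exact hσs j
          · exact le_refl _
        · exact update_le_self (hσs m)
    have hfin := key Finset.univ
    simpa using hfin
  set Bx : Set (Fin n → ℝ) := {y | ∀ j, p j - ε' ≤ y j ∧ y j < σ j} with hBxdef
  have measBx : MeasurableSet Bx := by
    have hrw : Bx = (⋂ j, (fun y : Fin n → ℝ => y j) ⁻¹' Set.Ici (p j - ε')) ∩
        ⋂ j, (fun y : Fin n → ℝ => y j) ⁻¹' Set.Iio (σ j) := by
      ext y; simp [hBxdef, forall_and]
    rw [hrw]
    exact (MeasurableSet.iInter fun j => (measurable_pi_apply j) measurableSet_Ici).inter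
      (MeasurableSet.iInter fun j => (measurable_pi_apply j) measurableSet_Iio)
  have hcover : lowQ σ ⊆ Bx ∪ ⋃ m, lowQ (Function.update s m (p m - ε')) := by
    intro y hy
    by_cases hyB : y ∈ Bx
    · exact Or.inl hyB
    · right
      simp only [hBxdef, Set.mem_setOf_eq, not_forall] at hyB
      obtain ⟨j, hj⟩ := hyB
      have hyj : y j < p j - ε' := by
        rcases not_and_or.mp hj with h | h
        · linarith [not_le.mp h]
        · exact absurd (hy j) h
      refine Set.mem_iUnion.mpr ⟨j, fun j' => ?_⟩
      rcases eq_or_ne j' j with rfl | hj'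
      · simpa using hyj
      · rw [Function.update_of_ne hj']
        exact lt_of_lt_of_le (hy j') (hσs j')
  have hVzero : ∀ m, muz x (lowQ (Function.update s m (p m - ε'))) = 0 :=
    fun m => hzero m _ (by linarith)
  have measU : MeasurableSet (⋃ m, lowQ (Function.update s m (p m - ε'))) :=
    MeasurableSet.iUnion fun m => measQ _
  have hUzero : muz x (⋃ m, lowQ (Function.update s m (p m - ε'))) = 0 := by
    have hrw : (⋃ m, lowQ (Function.update s m (p m - ε'))) =
        ⋃ m ∈ (Finset.univ : Finset (Fin n)), lowQ (Function.update s m (p m - ε')) := by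
      simp
    have hle := mu_biUnion_le hx (Finset.univ : Finset (Fin n))
      (fun m => lowQ (Function.update s m (p m - ε'))) (fun m => measQ _)
    rw [← hrw] at hle
    have hsum : ∑ m ∈ (Finset.univ : Finset (Fin n)),
        muz x ((fun m => lowQ (Function.update s m (p m - ε'))) m) = 0 :=
      Finset.sum_eq_zero fun m _ => hVzero m
    have h0 := mu_nonneg hx measU
    beta_reduce at hsum
    omega
  refine ⟨Bx, measBx, ?_, ?_⟩
  · have h1 : muz x (lowQ σ) ≤ muz x (Bx ∪ ⋃ m, lowQ (Function.update s m (p m - ε'))) :=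
      mu_mono hx (measQ σ) (measBx.union measU) hcover
    have h2 := mu_union_le hx measBx measU
    omega
  · intro y hy j
    have h1 := (hy j).1
    have h2 := (hy j).2
    have h3 : σ j ≤ p j + ε' := min_le_right _ _
    rw [abs_sub_lt_iff]
    constructor <;> [linarith; linarith]

end Obs4
end Dev4
theorem stmt_10 {G : Type*}
    [AddCommGroup G] [Lattice G] [CovariantClass G G (· + ·) (· ≤ ·)]
    (hG : DedekindSigmaComplete G) (k : ℕ) (hk : 1 ≤ k) (n : ℕ) (hn : 1 ≤ n)
    (x : Set (Fin n → ℝ) → ℤ ×ₗ G) (hx : IsObservable (k : ℤ) n x)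
    (i : ℕ) (hi1 : 1 ≤ i) (hik : i ≤ k)
    (hne : (TSet (k : ℤ) (specRes x) (i : ℤ)).Nonempty)
    (hleast : ∀ j : ℕ, 1 ≤ j → j < i → TSet (k : ℤ) (specRes x) (j : ℤ) = ∅) :
    (charPts (k : ℤ) (specRes x) (i : ℤ)).Finite := by
  classical
  by_contra hinf
  have hinf' : (charPts (k : ℤ) (specRes x) (i : ℤ)).Infinite := hinf
  obtain ⟨t, htsub, htcard⟩ := hinf'.exists_subset_card_eq (k + 1)
  -- witnesses for characteristic points
  have hwit : ∀ p : Fin n → ℝ, ∃ s : Fin n → ℝ, p ∈ t →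
      s ∈ TSet (k : ℤ) (specRes x) (i : ℤ) ∧ charPt (k : ℤ) (specRes x) (i : ℤ) s = p := by
    intro p
    by_cases hp : p ∈ t
    · obtain ⟨s, hsT, hsp⟩ := htsub hp
      exact ⟨s, fun _ => ⟨hsT, hsp⟩⟩
    · exact ⟨0, fun h => absurd h hp⟩
  choose w hw using hwit
  -- minimal distance and ε
  have h2card : 1 < t.card := by omega
  set pairs := (t ×ˢ t).filter (fun pq => pq.1 ≠ pq.2) with hpairs
  have hpairs_ne : pairs.Nonempty := by
    obtain ⟨a, ha, b, hb, hab⟩ := Finset.one_lt_card.mp h2card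
    exact ⟨(a, b), Finset.mem_filter.mpr ⟨Finset.mem_product.mpr ⟨ha, hb⟩, hab⟩⟩
  set dmin := (pairs.image fun pq => dist pq.1 pq.2).min' (hpairs_ne.image _) with hdmin
  have hdmin_pos : 0 < dmin := by
    have hmem := Finset.min'_mem (pairs.image fun pq => dist pq.1 pq.2) (hpairs_ne.image _)
    obtain ⟨pq, hpq, heq⟩ := Finset.mem_image.mp hmem
    have hne' : pq.1 ≠ pq.2 := (Finset.mem_filter.mp hpq).2
    rw [hdmin, ← heq]
    exact dist_pos.mpr hne'
  have hdmin_le : ∀ p ∈ t, ∀ q ∈ t, p ≠ q → dmin ≤ dist p q := by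
    intro p hp q hq hpq
    exact Finset.min'_le _ _ (Finset.mem_image.mpr
      ⟨(p, q), Finset.mem_filter.mpr ⟨Finset.mem_product.mpr ⟨hp, hq⟩, hpq⟩, rfl⟩)
  set ε := dmin / 3 with hε
  have hεpos : 0 < ε := by rw [hε]; positivity
  -- boxes of mass ≥ i near each characteristic point
  have hbox : ∀ p : Fin n → ℝ, ∃ Bx : Set (Fin n → ℝ), MeasurableSet Bx ∧
      (p ∈ t → (i : ℤ) ≤ muz x Bx ∧ ∀ y ∈ Bx, ∀ j, |y j - p j| < ε) := by
    intro p
    by_cases hp : p ∈ t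
    · obtain ⟨hsT, hsp⟩ := hw p hp
      obtain ⟨Bx, h1, h2, h3⟩ := exists_mass_box hx hi1 hleast hsT hεpos
      refine ⟨Bx, h1, fun _ => ⟨h2, fun y hy j => ?_⟩⟩
      have := h3 y hy j
      rw [hsp] at this
      exact this
    · exact ⟨∅, MeasurableSet.empty, fun h => absurd h hp⟩
  choose B hBmeas hBprop using hbox
  -- pairwise disjointness
  have hdisj : ∀ p ∈ t, ∀ q ∈ t, p ≠ q → Disjoint (B p) (B q) := by
    intro p hp q hq hpq
    rw [Set.disjoint_left]
    intro y hyp hyq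
    have hd : dmin ≤ dist p q := hdmin_le p hp q hq hpq
    have hj : ∃ j, 2 * ε < |p j - q j| := by
      by_contra hcon
      push_neg at hcon
      have hle : dist p q ≤ 2 * ε := by
        rw [dist_pi_le_iff (by positivity)]
        intro j
        rw [Real.dist_eq]
        exact hcon j
      rw [hε] at hle
      linarith
    obtain ⟨j, hj⟩ := hj
    have h4 : |p j - y j| < ε := by rw [abs_sub_comm]; exact (hBprop p hp).2 y hyp j
    have h5 : |y j - q j| < ε := (hBprop q hq).2 y hyq j
    linarith [abs_sub_le (p j) (y j) (q j)]
  -- counting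
  have hsum := mu_sum_le_of_disjoint hx t B hBmeas hdisj
  have hlow : ∀ p ∈ t, (i : ℤ) ≤ muz x (B p) := fun p hp => (hBprop p hp).1
  have hcount : (t.card : ℤ) * (i : ℤ) ≤ ∑ p ∈ t, muz x (B p) := by
    calc (t.card : ℤ) * (i : ℤ) = ∑ _p ∈ t, (i : ℤ) := by
          rw [Finset.sum_const, nsmul_eq_mul]
      _ ≤ ∑ p ∈ t, muz x (B p) := Finset.sum_le_sum hlow
  rw [htcard] at hcount
  have h9 : ((k : ℤ) + 1) ≤ ((k : ℤ) + 1) * (i : ℤ) :=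
    le_mul_of_one_le_right (by positivity) (by exact_mod_cast hi1)
  push_cast at hcount
  linarith
end
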